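/- Let I = [0, T], let ϑ be a finite compactly supported nonnegative Borel measure on ℝⁿ, and let f : I × ℝⁿ → ℝⁿ and g : I × ℝⁿ → ℝ be bounded functions, measurable in t and continuous in x. Let X : I × ℝⁿ → ℝⁿ be continuous such that for each x ∈ ℝⁿ the curve t ↦ X_t(x) is absolutely continuous, X_0(x) = x, and (d/dt) X_t(x) = f_t(X_t(x)) for almost every t ∈ I. Define Y_t(x) := exp(∫₀ᵗ g_τ(X_τ(x)) dτ). Define measures μ_t on ℝⁿ by ⟨μ_t, φ⟩ := ∫ Y_t(x) φ(X_t(x)) dϑ(x). Then for every continuously differentiable φ : ℝⁿ → ℝ with bounded gradient, the map t ↦ ⟨μ_t, φ⟩ is absolutely continuous on I and for almost every t ∈ I, (d/dt)⟨μ_t, φ⟩ = ∫ Y_t(x) [∇φ(X_t(x)) · f_t(X_t(x)) + g_t(X_t(x)) φ(X_t(x))] dϑ(x). -/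

import Mathlib

open MeasureTheory Set Filter Metric intervalIntegral IsUnifLocDoublingMeasure
open scoped Topology

/-- Almost everywhere differentiability of the primitive of a bounded measurable function
(Lebesgue differentiation theorem in FTC form). -/
theorem ae_hasDerivAt_primitive {E : Type*} [NormedAddCommGroup E] [NormedSpace ℝ E]
    [CompleteSpace E] {c : ℝ → E} (hc : AEStronglyMeasurable c volume)
    {M : ℝ} (hM : ∀ s, ‖c s‖ ≤ M) :
    ∀ᵐ s, HasDerivAt (fun t => ∫ r in (0:ℝ)..t, c r) (c s) s := by
  have hM0 : 0 ≤ M := le_trans (norm_nonneg _) (hM 0)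
  have loc : LocallyIntegrable c volume :=
    (locallyIntegrable_const M).mono hc (Eventually.of_forall fun s => by
      simpa [abs_of_nonneg hM0] using hM s)
  have intInt : ∀ a b : ℝ, IntervalIntegrable c volume a b := fun a b =>
    (loc.integrableOn_isCompact isCompact_uIcc).intervalIntegrable
  filter_upwards [(vitaliFamily (volume : Measure ℝ) 1).ae_tendsto_average_norm_sub loc]
    with s hs
  have hR : Tendsto (fun y => ⨍ r in Icc s y, ‖c r - c s‖) (𝓝[>] s) (𝓝 0) :=
    hs.comp (Real.tendsto_Icc_vitaliFamily_right s)
  have hL : Tendsto (fun y => ⨍ r in Icc y s, ‖c r - c s‖) (𝓝[<] s) (𝓝 0) :=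
    hs.comp (Real.tendsto_Icc_vitaliFamily_left s)
  rw [hasDerivAt_iff_tendsto]
  rw [← nhdsNE_sup_pure s, ← nhdsLT_sup_nhdsGT s, tendsto_sup,
    tendsto_sup]
  have key : ∀ a b : ℝ, a ≤ b → ‖((∫ r in (0:ℝ)..b, c r) - ∫ r in (0:ℝ)..a, c r)
      - (b - a) • c s‖ ≤ ∫ r in Icc a b, ‖c r - c s‖ := by
    intro a b hab
    have e1 : ((∫ r in (0:ℝ)..b, c r) - ∫ r in (0:ℝ)..a, c r) = ∫ r in a..b, c r :=
      integral_interval_sub_left (intInt 0 b) (intInt 0 a)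
    have e2 : (b - a) • c s = ∫ _r in a..b, c s := (intervalIntegral.integral_const _).symm
    rw [e1, e2, ← integral_sub (intInt a b) (intervalIntegrable_const)]
    calc ‖∫ r in a..b, (c r - c s)‖ ≤ ∫ r in a..b, ‖c r - c s‖ :=
          norm_integral_le_integral_norm hab
      _ = ∫ r in Ioc a b, ‖c r - c s‖ := by rw [integral_of_le hab]
      _ = ∫ r in Icc a b, ‖c r - c s‖ := (integral_Icc_eq_integral_Ioc).symm
  refine ⟨⟨?_, ?_⟩, ?_⟩
  · -- left: 𝓝[<] s
    refine squeeze_zero' (Eventually.of_forall fun y => by positivity) ?_ hL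
    filter_upwards [self_mem_nhdsWithin] with y (hy : y < s)
    have hys : y ≤ s := hy.le
    have hnorm : ‖y - s‖⁻¹ = (s - y)⁻¹ := by
      rw [norm_sub_rev, Real.norm_eq_abs, abs_of_nonneg (by linarith)]
    have hvol : volume.real (Icc y s) = s - y := by
      rw [Real.volume_real_Icc_of_le (by linarith)]
    have hkey := key y s hys
    have heq : ‖((∫ r in (0:ℝ)..y, c r) - ∫ r in (0:ℝ)..s, c r) - (y - s) • c s‖
        = ‖((∫ r in (0:ℝ)..s, c r) - ∫ r in (0:ℝ)..y, c r) - (s - y) • c s‖ := by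
      rw [← norm_neg]; congr 1; module
    rw [setAverage_eq, hvol, smul_eq_mul, hnorm, heq]
    exact mul_le_mul_of_nonneg_left hkey (inv_nonneg.2 (by linarith))
  · -- right: 𝓝[>] s
    refine squeeze_zero' (Eventually.of_forall fun y => by positivity) ?_ hR
    filter_upwards [self_mem_nhdsWithin] with y (hy : s < y)
    have hnorm : ‖y - s‖⁻¹ = (y - s)⁻¹ := by
      rw [Real.norm_eq_abs, abs_of_nonneg (by linarith)]
    have hvol : volume.real (Icc s y) = y - s := by
      rw [Real.volume_real_Icc_of_le (by linarith)]
    rw [setAverage_eq, hvol, smul_eq_mul, hnorm]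
    exact mul_le_mul_of_nonneg_left (key s y hy.le) (inv_nonneg.2 (by linarith))
  · -- pure s
    have hval : (fun x' => ‖x' - s‖⁻¹ *
        ‖((∫ r in (0:ℝ)..x', c r) - ∫ r in (0:ℝ)..s, c r) - (x' - s) • c s‖) s = 0 := by
      simp
    rw [tendsto_pure_left]
    intro U hU
    simpa [hval] using mem_of_mem_nhds hU

/-- Fundamental theorem of calculus for Lipschitz functions with an a.e. derivative. -/
theorem lipschitz_ftc {h h' : ℝ → ℝ} {L : ℝ}
    (hL : ∀ a b, |h a - h b| ≤ L * |a - b|)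
    (hd : ∀ᵐ s, HasDerivAt h (h' s) s) {t : ℝ} (ht : 0 ≤ t) :
    ∫ s in (0:ℝ)..t, h' s = h t - h 0 := by
  have hL0 : 0 ≤ L := by
    have := hL 0 1
    norm_num at this
    linarith [abs_nonneg (h 0 - h 1)]
  have hcont : Continuous h := by
    refine (LipschitzWith.of_dist_le_mul (K := ⟨L, hL0⟩) fun a b => ?_).continuous
    rw [Real.dist_eq, Real.dist_eq]; exact hL a b
  set ε : ℕ → ℝ := fun n => 1 / (n + 1) with hε
  have hεpos : ∀ n, 0 < ε n := fun n => by positivity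
  have hεlim : Tendsto ε atTop (𝓝 0) := tendsto_one_div_add_atTop_nhds_zero_nat
  have hseq : ∀ s : ℝ, Tendsto (fun n => s + ε n) atTop (𝓝[≠] s) := by
    intro s
    refine tendsto_nhdsWithin_of_tendsto_nhds_of_eventually_within _ ?_
      (Eventually.of_forall fun n => by
        simp only [mem_compl_iff, mem_singleton_iff]
        have := hεpos n; intro hc; nlinarith [congrArg (fun z => z - s) hc])
    simpa using (tendsto_const_nhds.add hεlim)
  set Q : ℕ → ℝ → ℝ := fun n s => (h (s + ε n) - h s) / ε n with hQ
  have hslope : ∀ (F : ℝ → ℝ) (s D : ℝ), HasDerivAt F D s →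
      Tendsto (fun n => (F (s + ε n) - F s) / ε n) atTop (𝓝 D) := by
    intro F s D hds
    have h2 := (hasDerivAt_iff_tendsto_slope.1 hds).comp (hseq s)
    refine h2.congr fun n => ?_
    simp only [Function.comp_apply, slope_def_field]
    rw [add_sub_cancel_left]
  have hQbd : ∀ n s, |Q n s| ≤ L := by
    intro n s
    rw [hQ]
    simp only [abs_div, abs_of_pos (hεpos n)]
    rw [div_le_iff₀ (hεpos n)]
    calc |h (s + ε n) - h s| ≤ L * |s + ε n - s| := hL _ _
      _ = L * ε n := by rw [add_sub_cancel_left, abs_of_pos (hεpos n)]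
  have hQmeas : ∀ n, Measurable (Q n) :=
    fun n => ((hcont.comp (continuous_id.add continuous_const)).sub hcont).measurable.div_const _
  have hfin : IsFiniteMeasure (volume.restrict (Ioc (0:ℝ) t)) := by
    constructor
    rw [Measure.restrict_apply_univ, Real.volume_Ioc]
    exact ENNReal.ofReal_lt_top
  have hae : ∀ᵐ s : ℝ, Tendsto (fun n => Q n s) atTop (𝓝 (h' s)) := by
    filter_upwards [hd] with s hds using hslope h s (h' s) hds
  have hDCT : Tendsto (fun n => ∫ s in Ioc (0:ℝ) t, Q n s) atTop
      (𝓝 (∫ s in Ioc (0:ℝ) t, h' s)) := by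
    refine tendsto_integral_of_dominated_convergence (fun _ => L)
      (fun n => (hQmeas n).aestronglyMeasurable) (integrable_const L)
      (fun n => Eventually.of_forall fun s => by
        simpa [Real.norm_eq_abs] using hQbd n s) (ae_restrict_of_ae hae)
  have hInt : ∀ a b : ℝ, IntervalIntegrable h volume a b := fun a b =>
    hcont.intervalIntegrable a b
  set G : ℝ → ℝ := fun u => ∫ r in (0:ℝ)..u, h r with hG
  have hQint : ∀ n, ∫ s in Ioc (0:ℝ) t, Q n s
      = (G (t + ε n) - G t) / ε n - (G (0 + ε n) - G 0) / ε n := by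
    intro n
    rw [← integral_of_le ht]
    have e0 : ∫ s in (0:ℝ)..t, Q n s = (ε n)⁻¹ * ∫ s in (0:ℝ)..t, (h (s + ε n) - h s) := by
      rw [← intervalIntegral.integral_const_mul]
      refine integral_congr fun s _ => ?_
      rw [hQ]; field_simp
    rw [e0, integral_sub (by
        exact (show Continuous (fun s => h (s + ε n)) from
          hcont.comp (continuous_id.add continuous_const)).intervalIntegrable 0 t)
      (hInt 0 t), integral_comp_add_right h (ε n),
      ← integral_interval_sub_left (hInt 0 (t + ε n)) (hInt 0 (0 + ε n))]
    have hG0 : G 0 = 0 := integral_same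
    rw [hG0]
    have hne := ne_of_gt (hεpos n)
    field_simp
    ring
  have hGt : HasDerivAt G (h t) t :=
    integral_hasDerivAt_right (hInt 0 t)
      (hcont.stronglyMeasurableAtFilter volume (𝓝 t)) hcont.continuousAt
  have hG0' : HasDerivAt G (h 0) 0 :=
    integral_hasDerivAt_right (hInt 0 0)
      (hcont.stronglyMeasurableAtFilter volume (𝓝 0)) hcont.continuousAt
  have hlim : Tendsto (fun n => ∫ s in Ioc (0:ℝ) t, Q n s) atTop (𝓝 (h t - h 0)) := by
    simp only [hQint]
    exact ((hslope G t (h t) hGt).sub (hslope G 0 (h 0) hG0'))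
  have hkey := tendsto_nhds_unique hDCT hlim
  rw [integral_of_le ht, hkey]

/-- Elementary local Lipschitz estimate for `Real.exp`. -/
theorem exp_abs_sub_le {p q M : ℝ} (hp : |p| ≤ M) (hq : |q| ≤ M) :
    |Real.exp p - Real.exp q| ≤ Real.exp M * |p - q| := by
  have core : ∀ a b : ℝ, b ≤ a → |a| ≤ M → |b| ≤ M →
      |Real.exp a - Real.exp b| ≤ Real.exp M * |a - b| := by
    intro a b hba ha hb
    have h1 : Real.exp a * ((b - a) + 1) ≤ Real.exp a * Real.exp (b - a) :=
      mul_le_mul_of_nonneg_left (Real.add_one_le_exp (b - a)) (Real.exp_pos a).le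
    rw [← Real.exp_add, add_sub_cancel] at h1
    have h2 : Real.exp a ≤ Real.exp M := Real.exp_le_exp.2 ((le_abs_self a).trans ha)
    have h3 : Real.exp b ≤ Real.exp a := Real.exp_le_exp.2 hba
    rw [abs_of_nonneg (by linarith), abs_of_nonneg (by linarith)]
    nlinarith [Real.exp_pos a, sub_nonneg.2 hba]
  rcases le_total q p with hqp | hpq
  · exact core p q hqp hp hq
  · rw [abs_sub_comm, abs_sub_comm p q]
    exact core q p hpq hq hp

/-- Uniform bound on the primitive of a bounded function supported in `Icc a b`. -/
theorem norm_primitive_indicator_le {E : Type*} [NormedAddCommGroup E] [NormedSpace ℝ E]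
    {F : ℝ → E} {C a b : ℝ} (hab : a ≤ b) (hmeas : AEStronglyMeasurable F volume)
    (hbd : ∀ s, ‖F s‖ ≤ C) (τ : ℝ) :
    ‖∫ r in (0:ℝ)..τ, (Set.Icc a b).indicator F r‖ ≤ C * (b - a) := by
  have hvol : volume (Set.Icc a b) ≠ ⊤ := by rw [Real.volume_Icc]; exact ENNReal.ofReal_ne_top
  have hint : Integrable ((Set.Icc a b).indicator F) volume := by
    refine (Measure.integrableOn_of_bounded (M := C) hvol hmeas ?_).integrable_indicator
      measurableSet_Icc
    exact Eventually.of_forall fun s => hbd s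
  calc ‖∫ r in (0:ℝ)..τ, (Set.Icc a b).indicator F r‖
      ≤ ∫ r in Set.uIoc 0 τ, ‖(Set.Icc a b).indicator F r‖ :=
        intervalIntegral.norm_integral_le_integral_norm_uIoc
    _ ≤ ∫ r, ‖(Set.Icc a b).indicator F r‖ :=
        setIntegral_le_integral hint.norm (Eventually.of_forall fun r => norm_nonneg _)
    _ ≤ ∫ r, (Set.Icc a b).indicator (fun _ => C) r := by
        refine integral_mono hint.norm ((integrable_indicator_iff measurableSet_Icc).2 ?_) ?_
        · exact integrableOn_const hvol
        · intro r
          show ‖(Set.Icc a b).indicator F r‖ ≤ (Set.Icc a b).indicator (fun _ => C) r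
          rw [norm_indicator_eq_indicator_norm]
          exact Set.indicator_le_indicator (hbd r)
    _ = C * (b - a) := by
        rw [integral_indicator_const _ measurableSet_Icc, Real.volume_real_Icc_of_le hab,
          smul_eq_mul, mul_comm]

/-- Characteristic representation of the balance law: if `X` is the flow
of the (bounded Carathéodory) vector field `f` (encoded in integral form) and
`Y_t(x) = exp(∫₀ᵗ g_τ(X_τ(x)) dτ)`, then the measures `μ_t` defined by
`⟨μ_t, φ⟩ = ∫ Y_t(x) φ(X_t(x)) dϑ(x)` form a distributional solution of the balance law
`∂_t μ + ∇·(f μ) = g μ`, `μ_0 = ϑ`: for every `C¹` function `φ` with bounded gradient,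
`t ↦ ⟨μ_t, φ⟩` is absolutely continuous with a.e. derivative
`∫ Y_t [∇φ(X_t)·f_t(X_t) + g_t(X_t) φ(X_t)] dϑ` (encoded in integral/FTC form). -/
theorem stmt2 (n : ℕ) (T : ℝ) (hT : 0 < T)
    (ϑ : Measure (EuclideanSpace ℝ (Fin n))) [IsFiniteMeasure ϑ]
    (hϑ_supp : ∃ K, IsCompact K ∧ ϑ Kᶜ = 0)
    (f : ℝ → EuclideanSpace ℝ (Fin n) → EuclideanSpace ℝ (Fin n))
    (g : ℝ → EuclideanSpace ℝ (Fin n) → ℝ)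
    (hf_meas : ∀ x, Measurable fun t => f t x) (hg_meas : ∀ x, Measurable fun t => g t x)
    (hf_cont : ∀ t, Continuous (f t)) (hg_cont : ∀ t, Continuous (g t))
    (hf_bdd : ∃ C, ∀ t x, ‖f t x‖ ≤ C) (hg_bdd : ∃ C, ∀ t x, |g t x| ≤ C)
    (X : ℝ → EuclideanSpace ℝ (Fin n) → EuclideanSpace ℝ (Fin n))
    (hX_cont : Continuous (Function.uncurry X))
    (hX0 : ∀ x, X 0 x = x)
    (hX_ode : ∀ x, ∀ t ∈ Icc 0 T, X t x = x + ∫ s in (0:ℝ)..t, f s (X s x))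
    (Y : ℝ → EuclideanSpace ℝ (Fin n) → ℝ)
    (hY : ∀ t x, Y t x = Real.exp (∫ s in (0:ℝ)..t, g s (X s x))) :
    ∀ φ : EuclideanSpace ℝ (Fin n) → ℝ, ContDiff ℝ 1 φ →
      (∃ C, ∀ x, ‖fderiv ℝ φ x‖ ≤ C) →
      ∀ t ∈ Icc 0 T,
        (∫ x, Y t x * φ (X t x) ∂ϑ) - (∫ x, Y 0 x * φ (X 0 x) ∂ϑ) =
          ∫ s in (0:ℝ)..t, ∫ x,
            Y s x * (fderiv ℝ φ (X s x) (f s (X s x)) + g s (X s x) * φ (X s x)) ∂ϑ := by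
  intro φ hφ hφbdd t ht
  obtain ⟨ht0, htT⟩ := ht
  obtain ⟨K, hK, hKc⟩ := hϑ_supp
  obtain ⟨Cf, hCf⟩ := hf_bdd
  obtain ⟨Cg, hCg⟩ := hg_bdd
  obtain ⟨Cφ, hCφ⟩ := hφbdd
  have hCf0 : 0 ≤ Cf := le_trans (norm_nonneg _) (hCf 0 0)
  have hCg0 : 0 ≤ Cg := le_trans (abs_nonneg _) (hCg 0 0)
  have hCφ0 : 0 ≤ Cφ := le_trans (norm_nonneg _) (hCφ 0)
  have hφc : Continuous φ := hφ.continuous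
  have hφd : Differentiable ℝ φ := hφ.differentiable one_ne_zero
  have hφ' : Continuous (fderiv ℝ φ) := hφ.continuous_fderiv one_ne_zero
  have hφlip : ∀ a b : EuclideanSpace ℝ (Fin n), |φ a - φ b| ≤ Cφ * ‖a - b‖ := fun a b =>
    convex_univ.norm_image_sub_le_of_norm_fderiv_le (fun y _ => hφd y) (fun y _ => hCφ y)
      (mem_univ b) (mem_univ a)
  -- joint measurability of the Carathéodory compositions
  have jmf : Measurable fun p : ℝ × EuclideanSpace ℝ (Fin n) => f p.1 (X p.1 p.2) := by
    have h1 : Measurable (Function.uncurry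
        fun (y : EuclideanSpace ℝ (Fin n)) (s : ℝ) => f s y) :=
      measurable_uncurry_of_continuous_of_measurable (fun s => hf_cont s) hf_meas
    exact h1.comp ((hX_cont.measurable).prodMk measurable_fst)
  have jmg : Measurable fun p : ℝ × EuclideanSpace ℝ (Fin n) => g p.1 (X p.1 p.2) := by
    have h1 : Measurable (Function.uncurry
        fun (y : EuclideanSpace ℝ (Fin n)) (s : ℝ) => g s y) :=
      measurable_uncurry_of_continuous_of_measurable (fun s => hg_cont s) hg_meas
    exact h1.comp ((hX_cont.measurable).prodMk measurable_fst)
  -- compact image and bound for φ along the flow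
  set R : Set (EuclideanSpace ℝ (Fin n)) := Function.uncurry X '' (Icc 0 T ×ˢ K) with hR
  have hRcomp : IsCompact R := (isCompact_Icc.prod hK).image hX_cont
  obtain ⟨Bφ0, hBφ0⟩ := hRcomp.exists_bound_of_continuousOn hφc.continuousOn
  set Bφ : ℝ := max Bφ0 0 with hBφdef
  have hBφ : ∀ s ∈ Icc (0:ℝ) T, ∀ x ∈ K, |φ (X s x)| ≤ Bφ := by
    intro s hs x hx
    have : X s x ∈ R := ⟨(s, x), ⟨hs, hx⟩, rfl⟩
    exact le_trans (hBφ0 _ this) (le_max_left _ _)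
  have hBφnn : 0 ≤ Bφ := le_max_right _ _
  -- truncated characteristics
  set S : Set ℝ := Icc (-1) (T + 1) with hS
  set cF : EuclideanSpace ℝ (Fin n) → ℝ → EuclideanSpace ℝ (Fin n) :=
    fun x => S.indicator (fun s => f s (X s x)) with hcF
  set dF : EuclideanSpace ℝ (Fin n) → ℝ → ℝ :=
    fun x => S.indicator (fun s => g s (X s x)) with hdF
  set vF : EuclideanSpace ℝ (Fin n) → ℝ → EuclideanSpace ℝ (Fin n) :=
    fun x τ => x + ∫ r in (0:ℝ)..τ, cF x r with hvF
  set uF : EuclideanSpace ℝ (Fin n) → ℝ → ℝ :=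
    fun x τ => ∫ r in (0:ℝ)..τ, dF x r with huF
  have hfXmeas : ∀ x, Measurable fun s => f s (X s x) := fun x =>
    jmf.comp (measurable_id.prodMk measurable_const)
  have hgXmeas : ∀ x, Measurable fun s => g s (X s x) := fun x =>
    jmg.comp (measurable_id.prodMk measurable_const)
  have hc_meas : ∀ x, Measurable (cF x) := fun x =>
    (hfXmeas x).indicator measurableSet_Icc
  have hd_meas : ∀ x, Measurable (dF x) := fun x =>
    (hgXmeas x).indicator measurableSet_Icc
  have hc_bd : ∀ x s, ‖cF x s‖ ≤ Cf := by
    intro x s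
    simp only [hcF]
    by_cases hs : s ∈ S
    · rw [Set.indicator_of_mem hs]; exact hCf _ _
    · rw [Set.indicator_of_notMem hs]; simpa using hCf0
  have hd_bd : ∀ x s, ‖dF x s‖ ≤ Cg := by
    intro x s
    simp only [hdF]
    by_cases hs : s ∈ S
    · rw [Set.indicator_of_mem hs]; exact hCg _ _
    · rw [Set.indicator_of_notMem hs]; simpa using hCg0
  -- a.e. derivatives of the truncated flow and weight exponent
  have hv_deriv : ∀ x, ∀ᵐ τ : ℝ, HasDerivAt (vF x) (cF x τ) τ := by
    intro x
    filter_upwards [ae_hasDerivAt_primitive (hc_meas x).aestronglyMeasurable (hc_bd x)]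
      with τ hτ
    exact hτ.const_add x
  have hu_deriv : ∀ x, ∀ᵐ τ : ℝ, HasDerivAt (uF x) (dF x τ) τ := fun x =>
    ae_hasDerivAt_primitive (hd_meas x).aestronglyMeasurable (hd_bd x)
  -- uniform bounds
  have hT2 : (-1:ℝ) ≤ T + 1 := by linarith
  have hu_bd : ∀ x τ, |uF x τ| ≤ Cg * (T + 2) := by
    intro x τ
    have := norm_primitive_indicator_le hT2 (hgXmeas x).aestronglyMeasurable
      (fun s => hCg s (X s x)) τ
    simp only [huF, hdF]
    calc |∫ r in (0:ℝ)..τ, S.indicator (fun s => g s (X s x)) r|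
        ≤ Cg * (T + 1 - (-1)) := this
      _ = Cg * (T + 2) := by ring_nf
  have hv_bd : ∀ x τ, ‖vF x τ - x‖ ≤ Cf * (T + 2) := by
    intro x τ
    have := norm_primitive_indicator_le hT2 (hfXmeas x).aestronglyMeasurable
      (fun s => hCf s (X s x)) τ
    simp only [hvF, add_sub_cancel_left]
    calc ‖∫ r in (0:ℝ)..τ, cF x r‖ ≤ Cf * (T + 1 - (-1)) := this
      _ = Cf * (T + 2) := by ring_nf
  have hIocvol : ∀ p q : ℝ, volume (Set.uIoc p q) ≠ ⊤ := fun p q => by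
    rw [Set.uIoc, Real.volume_Ioc]; exact ENNReal.ofReal_ne_top
  have hdint : ∀ x p q, IntervalIntegrable (dF x) volume p q := by
    intro x p q
    rw [intervalIntegrable_iff]
    exact Measure.integrableOn_of_bounded (M := Cg) (hIocvol p q)
      (hd_meas x).aestronglyMeasurable (Eventually.of_forall fun s => hd_bd x s)
  have hcint : ∀ x p q, IntervalIntegrable (cF x) volume p q := by
    intro x p q
    rw [intervalIntegrable_iff]
    exact Measure.integrableOn_of_bounded (M := Cf) (hIocvol p q)
      (hc_meas x).aestronglyMeasurable (Eventually.of_forall fun s => hc_bd x s)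
  -- Lipschitz estimates
  have hu_lip : ∀ x a b, |uF x a - uF x b| ≤ Cg * |a - b| := by
    intro x a b
    have e1 : uF x a - uF x b = ∫ r in b..a, dF x r :=
      integral_interval_sub_left (hdint x 0 a) (hdint x 0 b)
    rw [e1, ← Real.norm_eq_abs]
    exact intervalIntegral.norm_integral_le_of_norm_le_const (fun r _ => hd_bd x r)
  have hv_lip : ∀ x a b, ‖vF x a - vF x b‖ ≤ Cf * |a - b| := by
    intro x a b
    have e1 : vF x a - vF x b = ∫ r in b..a, cF x r := by
      rw [hvF]
      simp only [add_sub_add_left_eq_sub]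
      exact integral_interval_sub_left (hcint x 0 a) (hcint x 0 b)
    rw [e1]
    exact intervalIntegral.norm_integral_le_of_norm_le_const (fun r _ => hc_bd x r)
  -- the characteristic weight function and its derivative
  set hfun : EuclideanSpace ℝ (Fin n) → ℝ → ℝ :=
    fun x τ => Real.exp (uF x τ) * φ (vF x τ) with hhfun
  set hder : EuclideanSpace ℝ (Fin n) → ℝ → ℝ :=
    fun x τ => Real.exp (uF x τ) *
      (fderiv ℝ φ (vF x τ) (cF x τ) + dF x τ * φ (vF x τ)) with hhder
  have hfun_deriv : ∀ x, ∀ᵐ τ : ℝ, HasDerivAt (hfun x) (hder x τ) τ := by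
    intro x
    filter_upwards [hv_deriv x, hu_deriv x] with τ hv hu
    have h1 : HasDerivAt (fun τ => Real.exp (uF x τ)) (Real.exp (uF x τ) * dF x τ) τ := hu.exp
    have h2 : HasDerivAt (fun τ => φ (vF x τ)) (fderiv ℝ φ (vF x τ) (cF x τ)) τ :=
      (hφd (vF x τ)).hasFDerivAt.comp_hasDerivAt τ hv
    have h3 := h1.mul h2
    have e : hder x τ = Real.exp (uF x τ) * dF x τ * φ (vF x τ)
        + Real.exp (uF x τ) * fderiv ℝ φ (vF x τ) (cF x τ) := by
      show Real.exp (uF x τ) * (fderiv ℝ φ (vF x τ) (cF x τ) + dF x τ * φ (vF x τ)) = _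
      ring
    rw [e]
    exact h3
  -- global Lipschitz bound for `hfun x`
  set Mu : ℝ := Cg * (T + 2) with hMu
  set Mv : ℝ := Cf * (T + 2) with hMv
  have hfun_lip : ∀ x a b, |hfun x a - hfun x b| ≤
      (Real.exp Mu * (Cφ * Cf) + (|φ x| + Cφ * Mv) * (Real.exp Mu * Cg)) * |a - b| := by
    intro x a b
    have hexpa : |Real.exp (uF x a)| ≤ Real.exp Mu := by
      rw [abs_of_pos (Real.exp_pos _)]
      exact Real.exp_le_exp.2 ((le_abs_self _).trans (hu_bd x a))
    have hphib : |φ (vF x b)| ≤ |φ x| + Cφ * Mv := by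
      calc |φ (vF x b)| = |(φ (vF x b) - φ x) + φ x| := by ring_nf
        _ ≤ |φ (vF x b) - φ x| + |φ x| := abs_add_le _ _
        _ ≤ Cφ * ‖vF x b - x‖ + |φ x| := by
            exact add_le_add_left (hφlip _ _) _
        _ ≤ Cφ * Mv + |φ x| := by
            exact add_le_add_left (mul_le_mul_of_nonneg_left (hv_bd x b) hCφ0) _
        _ = |φ x| + Cφ * Mv := by ring
    have hdphi : |φ (vF x a) - φ (vF x b)| ≤ Cφ * Cf * |a - b| := by
      calc |φ (vF x a) - φ (vF x b)| ≤ Cφ * ‖vF x a - vF x b‖ := hφlip _ _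
        _ ≤ Cφ * (Cf * |a - b|) := mul_le_mul_of_nonneg_left (hv_lip x a b) hCφ0
        _ = Cφ * Cf * |a - b| := by ring
    have hdexp : |Real.exp (uF x a) - Real.exp (uF x b)| ≤ Real.exp Mu * Cg * |a - b| := by
      calc |Real.exp (uF x a) - Real.exp (uF x b)|
          ≤ Real.exp Mu * |uF x a - uF x b| := exp_abs_sub_le (hu_bd x a) (hu_bd x b)
        _ ≤ Real.exp Mu * (Cg * |a - b|) :=
            mul_le_mul_of_nonneg_left (hu_lip x a b) (Real.exp_pos _).le
        _ = Real.exp Mu * Cg * |a - b| := by ring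
    have hdecomp : hfun x a - hfun x b
        = Real.exp (uF x a) * (φ (vF x a) - φ (vF x b))
          + φ (vF x b) * (Real.exp (uF x a) - Real.exp (uF x b)) := by
      simp only [hhfun]; ring
    rw [hdecomp]
    calc |Real.exp (uF x a) * (φ (vF x a) - φ (vF x b))
          + φ (vF x b) * (Real.exp (uF x a) - Real.exp (uF x b))|
        ≤ |Real.exp (uF x a)| * |φ (vF x a) - φ (vF x b)|
          + |φ (vF x b)| * |Real.exp (uF x a) - Real.exp (uF x b)| := by
          refine (abs_add_le _ _).trans ?_
          rw [abs_mul, abs_mul]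
      _ ≤ Real.exp Mu * (Cφ * Cf * |a - b|)
          + (|φ x| + Cφ * Mv) * (Real.exp Mu * Cg * |a - b|) := by
          refine add_le_add (mul_le_mul hexpa hdphi (abs_nonneg _) (Real.exp_pos _).le)
            (mul_le_mul hphib hdexp (abs_nonneg _) ?_)
          have : (0:ℝ) ≤ Cφ * Mv := by
            rw [hMv]; positivity
          positivity
      _ = (Real.exp Mu * (Cφ * Cf) + (|φ x| + Cφ * Mv) * (Real.exp Mu * Cg)) * |a - b| := by
          ring
  -- identification with the original data on `[0, T]`
  have hmemS : ∀ τ ∈ Icc (0:ℝ) T, τ ∈ S := fun τ hτ => ⟨by linarith [hτ.1], by linarith [hτ.2]⟩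
  have hveq : ∀ x, ∀ τ ∈ Icc (0:ℝ) T, vF x τ = X τ x := by
    intro x τ hτ
    simp only [hvF]
    rw [hX_ode x τ hτ]
    congr 1
    simp only [hcF]
    refine intervalIntegral.integral_congr fun r hr => ?_
    rw [Set.uIcc_of_le hτ.1] at hr
    exact Set.indicator_of_mem (hmemS r ⟨hr.1, le_trans hr.2 hτ.2⟩) _
  have hueq : ∀ x, ∀ τ ∈ Icc (0:ℝ) T, Real.exp (uF x τ) = Y τ x := by
    intro x τ hτ
    rw [hY]
    congr 1
    simp only [huF, hdF]
    refine intervalIntegral.integral_congr fun r hr => ?_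
    rw [Set.uIcc_of_le hτ.1] at hr
    exact Set.indicator_of_mem (hmemS r ⟨hr.1, le_trans hr.2 hτ.2⟩) _
  have htmem : t ∈ Icc (0:ℝ) T := ⟨ht0, htT⟩
  have h0mem : (0:ℝ) ∈ Icc (0:ℝ) T := ⟨le_rfl, hT.le⟩
  -- pointwise (in x) fundamental theorem of calculus
  have perx : ∀ x, Y t x * φ (X t x) - Y 0 x * φ (X 0 x)
      = ∫ τ in Set.Ioc (0:ℝ) t,
          Y τ x * (fderiv ℝ φ (X τ x) (f τ (X τ x)) + g τ (X τ x) * φ (X τ x)) := by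
    intro x
    have hftc := lipschitz_ftc (hfun_lip x) (hfun_deriv x) ht0
    have hft : hfun x t = Y t x * φ (X t x) := by
      simp only [hhfun]
      rw [hueq x t htmem, hveq x t htmem]
    have hf0 : hfun x 0 = Y 0 x * φ (X 0 x) := by
      simp only [hhfun]
      rw [hueq x 0 h0mem, hveq x 0 h0mem]
    have hcongr : ∫ τ in (0:ℝ)..t, hder x τ = ∫ τ in (0:ℝ)..t,
        Y τ x * (fderiv ℝ φ (X τ x) (f τ (X τ x)) + g τ (X τ x) * φ (X τ x)) := by
      refine intervalIntegral.integral_congr fun τ hτ => ?_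
      rw [Set.uIcc_of_le ht0] at hτ
      have hτT : τ ∈ Icc (0:ℝ) T := ⟨hτ.1, le_trans hτ.2 htT⟩
      simp only [hhder, hcF, hdF]
      rw [hueq x τ hτT, hveq x τ hτT,
        Set.indicator_of_mem (hmemS τ hτT), Set.indicator_of_mem (hmemS τ hτT)]
    rw [← hft, ← hf0, ← hftc, hcongr, intervalIntegral.integral_of_le ht0]
  -- measurability of all the integrands
  have hXm : Measurable fun p : ℝ × EuclideanSpace ℝ (Fin n) => X p.1 p.2 :=
    hX_cont.measurable
  have hZmeas : Measurable fun p : ℝ × EuclideanSpace ℝ (Fin n) =>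
      ∫ r in (0:ℝ)..p.1, g r (X r p.2) := by
    have hcont : ∀ x : EuclideanSpace ℝ (Fin n),
        Continuous fun s : ℝ => ∫ r in (0:ℝ)..s, g r (X r x) := by
      intro x
      refine intervalIntegral.continuous_primitive (fun a b => ?_) 0
      rw [intervalIntegrable_iff]
      exact Measure.integrableOn_of_bounded (M := Cg) (hIocvol a b)
        (hgXmeas x).aestronglyMeasurable
        (Eventually.of_forall fun s => by simpa using hCg s (X s x))
    have hmeas : ∀ s : ℝ, Measurable fun x : EuclideanSpace ℝ (Fin n) =>
        ∫ r in (0:ℝ)..s, g r (X r x) := by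
      intro s
      have hbase : StronglyMeasurable (Function.uncurry
          fun (x : EuclideanSpace ℝ (Fin n)) (r : ℝ) => g r (X r x)) :=
        (jmg.comp measurable_swap).stronglyMeasurable
      have h1 : ∀ u : Set ℝ, Measurable fun x : EuclideanSpace ℝ (Fin n) =>
          ∫ r in u, g r (X r x) := fun u =>
        (hbase.integral_prod_right (ν := volume.restrict u)).measurable
      simp only [intervalIntegral]
      exact (h1 _).sub (h1 _)
    exact measurable_uncurry_of_continuous_of_measurable hcont hmeas
  have hYmeas : Measurable fun p : ℝ × EuclideanSpace ℝ (Fin n) => Y p.1 p.2 := by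
    have : (fun p : ℝ × EuclideanSpace ℝ (Fin n) => Y p.1 p.2)
        = fun p => Real.exp (∫ r in (0:ℝ)..p.1, g r (X r p.2)) := by
      funext p; rw [hY]
    rw [this]
    exact Real.measurable_exp.comp hZmeas
  have hWmeas : Measurable fun p : ℝ × EuclideanSpace ℝ (Fin n) =>
      Y p.1 p.2 * (fderiv ℝ φ (X p.1 p.2) (f p.1 (X p.1 p.2))
        + g p.1 (X p.1 p.2) * φ (X p.1 p.2)) := by
    have h1 : Measurable fun p : ℝ × EuclideanSpace ℝ (Fin n) =>
        fderiv ℝ φ (X p.1 p.2) (f p.1 (X p.1 p.2)) := by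
      have hA : Continuous fun p : ℝ × EuclideanSpace ℝ (Fin n) =>
          fderiv ℝ φ (X p.1 p.2) := hφ'.comp hX_cont
      exact (isBoundedBilinearMap_apply.continuous).measurable.comp
        (hA.measurable.prodMk jmf)
    exact hYmeas.mul (h1.add (jmg.mul ((hφc.comp hX_cont).measurable)))
  -- uniform bound for Y on [0,T]
  have hYbd : ∀ s ∈ Icc (0:ℝ) T, ∀ x, |Y s x| ≤ Real.exp (Cg * T) := by
    intro s hs x
    rw [hY, abs_of_pos (Real.exp_pos _)]
    refine Real.exp_le_exp.2 (le_trans (le_abs_self _) ?_)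
    rw [← Real.norm_eq_abs]
    calc ‖∫ r in (0:ℝ)..s, g r (X r x)‖ ≤ Cg * |s - 0| :=
          intervalIntegral.norm_integral_le_of_norm_le_const fun r _ => by
            simpa using hCg r (X r x)
      _ ≤ Cg * T := by
          rw [sub_zero, abs_of_nonneg hs.1]
          exact mul_le_mul_of_nonneg_left hs.2 hCg0
  have hKae : ∀ᵐ x ∂ϑ, x ∈ K := by
    rw [ae_iff]
    exact hKc
  -- integrability of the time slices
  have hslice : ∀ s ∈ Icc (0:ℝ) T, Integrable (fun x => Y s x * φ (X s x)) ϑ := by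
    intro s hs
    refine ⟨((hYmeas.comp (measurable_const.prodMk measurable_id)).mul
      ((hφc.comp (hX_cont.comp (continuous_const.prodMk continuous_id))).measurable
        )).aestronglyMeasurable, ?_⟩
    refine HasFiniteIntegral.of_bounded (C := Real.exp (Cg * T) * Bφ) ?_
    filter_upwards [hKae] with x hx
    rw [Real.norm_eq_abs, abs_mul]
    exact mul_le_mul (hYbd s hs x) (hBφ s hs x hx) (abs_nonneg _) (Real.exp_pos _).le
  -- Fubini on [0,t] × K
  haveI hfin : IsFiniteMeasure (volume.restrict (Set.Ioc (0:ℝ) t)) := by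
    constructor
    rw [Measure.restrict_apply_univ, Real.volume_Ioc]
    exact ENNReal.ofReal_lt_top
  have hprodint : Integrable (Function.uncurry fun (x : EuclideanSpace ℝ (Fin n)) (τ : ℝ) =>
      Y τ x * (fderiv ℝ φ (X τ x) (f τ (X τ x)) + g τ (X τ x) * φ (X τ x)))
      (ϑ.prod (volume.restrict (Set.Ioc (0:ℝ) t))) := by
    constructor
    · exact (hWmeas.comp measurable_swap).aestronglyMeasurable
    · refine HasFiniteIntegral.of_bounded
        (C := Real.exp (Cg * T) * (Cφ * Cf + Cg * Bφ)) ?_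
      have h1 : ∀ᵐ p : EuclideanSpace ℝ (Fin n) × ℝ
          ∂(ϑ.prod (volume.restrict (Set.Ioc (0:ℝ) t))), p.1 ∈ K := by
        rw [ae_iff]
        have hsub : {p : EuclideanSpace ℝ (Fin n) × ℝ | ¬ p.1 ∈ K}
            ⊆ Kᶜ ×ˢ (Set.univ : Set ℝ) := fun p hp => ⟨hp, Set.mem_univ _⟩
        have hz : (ϑ.prod (volume.restrict (Set.Ioc (0:ℝ) t)))
            (Kᶜ ×ˢ (Set.univ : Set ℝ)) = 0 := by
          rw [Measure.prod_prod, hKc, zero_mul]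
        exact measure_mono_null hsub hz
      have h2 : ∀ᵐ p : EuclideanSpace ℝ (Fin n) × ℝ
          ∂(ϑ.prod (volume.restrict (Set.Ioc (0:ℝ) t))), p.2 ∈ Set.Ioc (0:ℝ) t := by
        rw [ae_iff]
        have hsub : {p : EuclideanSpace ℝ (Fin n) × ℝ | ¬ p.2 ∈ Set.Ioc (0:ℝ) t}
            ⊆ (Set.univ : Set (EuclideanSpace ℝ (Fin n))) ×ˢ (Set.Ioc (0:ℝ) t)ᶜ :=
          fun p hp => ⟨Set.mem_univ _, hp⟩
        have hz : (ϑ.prod (volume.restrict (Set.Ioc (0:ℝ) t)))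
            ((Set.univ : Set (EuclideanSpace ℝ (Fin n))) ×ˢ (Set.Ioc (0:ℝ) t)ᶜ) = 0 := by
          rw [Measure.prod_prod, Measure.restrict_apply (measurableSet_Ioc.compl),
            Set.compl_inter_self, measure_empty, mul_zero]
        exact measure_mono_null hsub hz
      filter_upwards [h1, h2] with p hx hτ
      have hτT : p.2 ∈ Icc (0:ℝ) T := ⟨hτ.1.le, le_trans hτ.2 htT⟩
      have hb1 : |fderiv ℝ φ (X p.2 p.1) (f p.2 (X p.2 p.1))| ≤ Cφ * Cf := by
        rw [← Real.norm_eq_abs]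
        calc ‖fderiv ℝ φ (X p.2 p.1) (f p.2 (X p.2 p.1))‖
            ≤ ‖fderiv ℝ φ (X p.2 p.1)‖ * ‖f p.2 (X p.2 p.1)‖ :=
              (fderiv ℝ φ (X p.2 p.1)).le_opNorm _
          _ ≤ Cφ * Cf := mul_le_mul (hCφ _) (hCf _ _) (norm_nonneg _) hCφ0
      have hb2 : |g p.2 (X p.2 p.1) * φ (X p.2 p.1)| ≤ Cg * Bφ := by
        rw [abs_mul]
        exact mul_le_mul (hCg _ _) (hBφ p.2 hτT p.1 hx) (abs_nonneg _) hCg0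
      simp only [Function.uncurry]
      rw [Real.norm_eq_abs, abs_mul]
      exact mul_le_mul (hYbd p.2 hτT p.1) (le_trans (abs_add_le _ _) (add_le_add hb1 hb2))
        (abs_nonneg _) (Real.exp_pos _).le
  -- conclusion
  rw [intervalIntegral.integral_of_le ht0]
  calc (∫ x, Y t x * φ (X t x) ∂ϑ) - ∫ x, Y 0 x * φ (X 0 x) ∂ϑ
      = ∫ x, (Y t x * φ (X t x) - Y 0 x * φ (X 0 x)) ∂ϑ :=
        (integral_sub (hslice t htmem) (hslice 0 h0mem)).symm
    _ = ∫ x, (∫ τ in Set.Ioc (0:ℝ) t,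
          Y τ x * (fderiv ℝ φ (X τ x) (f τ (X τ x)) + g τ (X τ x) * φ (X τ x))) ∂ϑ :=
        integral_congr_ae (Eventually.of_forall perx)
    _ = ∫ τ in Set.Ioc (0:ℝ) t, (∫ x,
          Y τ x * (fderiv ℝ φ (X τ x) (f τ (X τ x)) + g τ (X τ x) * φ (X τ x)) ∂ϑ) :=
        integral_integral_swap hprodint
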